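/- Let B∈ℝ^{m₁×m₁} be positive definite with eigenvalues λ₁(B)≥…≥λ_{m₁}(B)>0, unit eigenvector u associated with λ_{m₁}(B), and condition number cond(B)=λ₁(B)/λ_{m₁}(B). (1) For A∈ℝ^{m₁×m₂} and any positive integer k, if uᵀA ≠ 0 then, with B_L=uᵀAAᵀu and B_U=Tr(AAᵀ) (both positive and independent of cond(B)), B_L·cond(B)ᵏ/λ₁(B)ᵏ ≤ Tr(AᵀB⁻ᵏA) ≤ B_U·cond(B)ᵏ/λ₁(B)ᵏ. (2) If m₁=m₂ and uᵀAu ≠ 0 then, with B_L=(uᵀAu)² and B_U=Tr(AAᵀ), B_L·cond(B)³/λ₁(B)³ ≤ Tr(B⁻¹AᵀB⁻¹AB⁻¹) ≤ B_U·cond(B)³/λ₁(B)³. -/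

import Mathlib

open Matrix

lemma tr_form {n p : Type*} [Fintype n] [Fintype p] (M : Matrix n n ℝ) (A : Matrix n p ℝ) :
    (Aᵀ * M * A).trace = ∑ j, (fun i => A i j) ⬝ᵥ (M *ᵥ fun i => A i j) := by
  simp only [Matrix.trace, Matrix.diag, Matrix.mul_apply, dotProduct, Matrix.mulVec,
    Matrix.transpose_apply, Finset.mul_sum, Finset.sum_mul]
  refine Finset.sum_congr rfl fun j _ => ?_
  rw [Finset.sum_comm]
  exact Finset.sum_congr rfl fun i _ => Finset.sum_congr rfl fun l _ => by ring

lemma tr_sq {n p : Type*} [Fintype n] [Fintype p] (A : Matrix n p ℝ) :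
    (A * Aᵀ).trace = ∑ j, (fun i => A i j) ⬝ᵥ (fun i => A i j) := by
  simp only [Matrix.trace, Matrix.diag, Matrix.mul_apply, dotProduct, Matrix.transpose_apply]
  exact Finset.sum_comm

lemma quad_form {n p : Type*} [Fintype n] [Fintype p] (A : Matrix n p ℝ) (u : n → ℝ) :
    u ⬝ᵥ ((A * Aᵀ) *ᵥ u) = ∑ j, (u ⬝ᵥ fun i => A i j) ^ 2 := by
  simp only [dotProduct, Matrix.mulVec, Matrix.mul_apply, Matrix.transpose_apply, sq,
    Finset.mul_sum, Finset.sum_mul]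
  calc (∑ x : n, ∑ x_1 : n, ∑ i : p, u x * (A x i * A x_1 i * u x_1))
      = ∑ x : n, ∑ i : p, ∑ x_1 : n, u x * (A x i * A x_1 i * u x_1) :=
        Finset.sum_congr rfl fun _ _ => Finset.sum_comm
    _ = ∑ i : p, ∑ x : n, ∑ x_1 : n, u x * (A x i * A x_1 i * u x_1) := Finset.sum_comm
    _ = ∑ x : p, ∑ x_1 : n, ∑ i : n, u i * A i x * (u x_1 * A x_1 x) :=
        Finset.sum_congr rfl fun j _ => by
          rw [Finset.sum_comm]
          exact Finset.sum_congr rfl fun a _ => Finset.sum_congr rfl fun b _ => by ring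

lemma sym_move {n : Type*} [Fintype n] {M : Matrix n n ℝ} (hM : Mᵀ = M) (x y : n → ℝ) :
    x ⬝ᵥ (M *ᵥ y) = (M *ᵥ x) ⬝ᵥ y := by
  rw [Matrix.dotProduct_mulVec, ← Matrix.mulVec_transpose, hM]

lemma psd_nonneg {n : Type*} [Fintype n] {C : Matrix n n ℝ} (hC : C.PosSemidef) (x : n → ℝ) :
    0 ≤ x ⬝ᵥ (C *ᵥ x) := by simpa using hC.dotProduct_mulVec_nonneg x

lemma dot_self_nonneg {n : Type*} [Fintype n] (x : n → ℝ) : 0 ≤ x ⬝ᵥ x :=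
  Finset.sum_nonneg fun i _ => mul_self_nonneg _

lemma tr_AAT_pos {n p : Type*} [Fintype n] [Fintype p] {A : Matrix n p ℝ} (hA : A ≠ 0) :
    0 < (A * Aᵀ).trace := by
  obtain ⟨i, j, hij⟩ : ∃ i j, A i j ≠ 0 := by
    by_contra h
    push_neg at h
    exact hA (Matrix.ext fun i j => by simp [h])
  rw [tr_sq]
  refine Finset.sum_pos' (fun j _ => dot_self_nonneg _) ⟨j, Finset.mem_univ j, ?_⟩
  exact Finset.sum_pos' (fun i _ => mul_self_nonneg _)
    ⟨i, Finset.mem_univ i, mul_self_pos.mpr hij⟩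

lemma herm_symm {n : Type*} {M : Matrix n n ℝ} (h : M.IsHermitian) : Mᵀ = M := by
  rw [← Matrix.conjTranspose_eq_transpose_of_trivial]; exact h

open scoped MatrixOrder in
noncomputable def Matrix.PosSemidef.sqrt {n : Type*} [Fintype n] [DecidableEq n] {C : Matrix n n ℝ}
    (_hC : C.PosSemidef) : Matrix n n ℝ := CFC.sqrt C

open scoped MatrixOrder in
lemma Matrix.PosSemidef.posSemidef_sqrt {n : Type*} [Fintype n] [DecidableEq n]
    {C : Matrix n n ℝ} (hC : C.PosSemidef) : (hC.sqrt).PosSemidef :=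
  Matrix.nonneg_iff_posSemidef.mp (CFC.sqrt_nonneg C)

open scoped MatrixOrder in
lemma Matrix.PosSemidef.sqrt_mul_self {n : Type*} [Fintype n] [DecidableEq n]
    {C : Matrix n n ℝ} (hC : C.PosSemidef) : hC.sqrt * hC.sqrt = C :=
  CFC.sqrt_mul_sqrt_self C (Matrix.nonneg_iff_posSemidef.mpr hC)

lemma quad_upper {n : Type*} [Fintype n] [DecidableEq n] {C : Matrix n n ℝ}
    (hC : C.PosSemidef) {c : ℝ} (hc : 0 ≤ c)
    (h1 : ∀ x, x ⬝ᵥ (C *ᵥ x) ≤ c * (x ⬝ᵥ x)) :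
    ∀ (k : ℕ) (x : n → ℝ), x ⬝ᵥ (C ^ k *ᵥ x) ≤ c ^ k * (x ⬝ᵥ x) := by
  intro k
  induction k with
  | zero => intro x; simp [Matrix.one_mulVec]
  | succ k ih =>
    intro x
    have hS : (hC.sqrt).PosSemidef := hC.posSemidef_sqrt
    have hSS : hC.sqrt * hC.sqrt = C := hC.sqrt_mul_self
    have hSsym : (hC.sqrt)ᵀ = hC.sqrt := herm_symm hS.1
    have hcomm : hC.sqrt * C ^ k = C ^ k * hC.sqrt := by
      have h : Commute hC.sqrt (hC.sqrt * hC.sqrt) :=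
        (Commute.refl hC.sqrt).mul_right (Commute.refl hC.sqrt)
      rw [hSS] at h
      exact (h.pow_right k).eq
    have hrw : C ^ (k + 1) = hC.sqrt * (C ^ k * hC.sqrt) := by
      rw [← mul_assoc, hcomm, mul_assoc, hSS, ← pow_succ]
    calc x ⬝ᵥ (C ^ (k + 1) *ᵥ x)
        = (hC.sqrt *ᵥ x) ⬝ᵥ (C ^ k *ᵥ (hC.sqrt *ᵥ x)) := by
          rw [hrw, ← Matrix.mulVec_mulVec, sym_move hSsym, Matrix.mulVec_mulVec]
      _ ≤ c ^ k * ((hC.sqrt *ᵥ x) ⬝ᵥ (hC.sqrt *ᵥ x)) := ih _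
      _ = c ^ k * (x ⬝ᵥ (C *ᵥ x)) := by
          rw [← sym_move hSsym, Matrix.mulVec_mulVec, hSS]
      _ ≤ c ^ k * (c * (x ⬝ᵥ x)) := mul_le_mul_of_nonneg_left (h1 x) (pow_nonneg hc k)
      _ = c ^ (k + 1) * (x ⬝ᵥ x) := by ring

lemma quad_lower {n : Type*} [Fintype n] [DecidableEq n] {C : Matrix n n ℝ}
    (hC : C.PosSemidef) {μ : ℝ} {u : n → ℝ} (hu : u ⬝ᵥ u = 1)
    (heig : C *ᵥ u = μ • u) (k : ℕ) (x : n → ℝ) :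
    μ ^ k * (u ⬝ᵥ x) ^ 2 ≤ x ⬝ᵥ (C ^ k *ᵥ x) := by
  have hk : C ^ k *ᵥ u = μ ^ k • u := by
    induction k with
    | zero => simp
    | succ k ih =>
      rw [pow_succ, ← Matrix.mulVec_mulVec, heig, Matrix.mulVec_smul, ih, smul_smul,
        mul_comm μ (μ ^ k), ← pow_succ]
  have hpsd : (C ^ k).PosSemidef := hC.pow k
  have hsym : (C ^ k)ᵀ = C ^ k := herm_symm hpsd.1
  set t := u ⬝ᵥ x with ht
  set w := x - t • u with hw
  have hwu : u ⬝ᵥ w = 0 := by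
    rw [hw, dotProduct_sub, dotProduct_smul, hu, smul_eq_mul, mul_one, ← ht, sub_self]
  have hx : x = w + t • u := by rw [hw, sub_add_cancel]
  have hcross1 : u ⬝ᵥ (C ^ k *ᵥ w) = 0 := by
    rw [sym_move hsym, hk, smul_dotProduct, hwu, smul_eq_mul, mul_zero]
  have hcross2 : w ⬝ᵥ (C ^ k *ᵥ u) = 0 := by
    rw [hk, dotProduct_smul, dotProduct_comm, hwu, smul_zero]
  have hwu' : w ⬝ᵥ u = 0 := by rw [dotProduct_comm]; exact hwu
  have hmain : x ⬝ᵥ (C ^ k *ᵥ x) = w ⬝ᵥ (C ^ k *ᵥ w) + μ ^ k * t ^ 2 := by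
    conv_lhs => rw [hx]
    simp only [Matrix.mulVec_add, Matrix.mulVec_smul, add_dotProduct, dotProduct_add,
      smul_dotProduct, dotProduct_smul, hcross1, hcross2, hk, hwu, hwu', hu, smul_eq_mul,
      mul_zero, zero_mul, mul_one, add_zero, zero_add]
    ring
  have hwpos := psd_nonneg hpsd w
  rw [hmain]
  nlinarith [sq_nonneg t]

/-- Trace bounds in terms of the condition number
`cond(B) = λ₁(B)/λ_{m₁}(B)` of a positive definite matrix `B`. -/
theorem stmt19 (m1 m2 : ℕ)
    (B : Matrix (Fin m1) (Fin m1) ℝ) (hB : B.PosDef)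
    (lam1 lamm : ℝ) (hlamm : 0 < lamm) (hle : lamm ≤ lam1)
    (u : Fin m1 → ℝ) (hu_norm : u ⬝ᵥ u = 1)
    -- `u` is a unit eigenvector of `B` for the smallest eigenvalue `λ_{m₁}(B)`
    (hu_eig : B *ᵥ u = lamm • u)
    -- `λ₁(B)` and `λ_{m₁}(B)` are the largest and smallest eigenvalues of `B`
    (hlam1_max : ∀ x : Fin m1 → ℝ, x ⬝ᵥ (B *ᵥ x) ≤ lam1 * (x ⬝ᵥ x))
    (hlamm_min : ∀ x : Fin m1 → ℝ, lamm * (x ⬝ᵥ x) ≤ x ⬝ᵥ (B *ᵥ x)) :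
    -- (1) for `A ∈ ℝ^{m₁×m₂}` with `uᵀA ≠ 0`, with `B_L = uᵀAAᵀu`, `B_U = Tr(AAᵀ)`
    (∀ (A : Matrix (Fin m1) (Fin m2) ℝ) (k : ℕ), 0 < k → u ᵥ* A ≠ 0 →
      0 < u ⬝ᵥ ((A * Aᵀ) *ᵥ u) ∧ 0 < (A * Aᵀ).trace ∧
        (u ⬝ᵥ ((A * Aᵀ) *ᵥ u)) * (lam1 / lamm) ^ k / lam1 ^ k ≤
            (Aᵀ * (B⁻¹) ^ k * A).trace ∧
          (Aᵀ * (B⁻¹) ^ k * A).trace ≤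
            (A * Aᵀ).trace * (lam1 / lamm) ^ k / lam1 ^ k) ∧
    -- (2) for square `A ∈ ℝ^{m₁×m₁}` with `uᵀAu ≠ 0`,
    --     with `B_L = (uᵀAu)²`, `B_U = Tr(AAᵀ)`
    (∀ A : Matrix (Fin m1) (Fin m1) ℝ, u ⬝ᵥ (A *ᵥ u) ≠ 0 →
      0 < (u ⬝ᵥ (A *ᵥ u)) ^ 2 ∧ 0 < (A * Aᵀ).trace ∧
        (u ⬝ᵥ (A *ᵥ u)) ^ 2 * (lam1 / lamm) ^ 3 / lam1 ^ 3 ≤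
            (B⁻¹ * Aᵀ * B⁻¹ * A * B⁻¹).trace ∧
          (B⁻¹ * Aᵀ * B⁻¹ * A * B⁻¹).trace ≤
            (A * Aᵀ).trace * (lam1 / lamm) ^ 3 / lam1 ^ 3) := by
  have hlam1 : 0 < lam1 := lt_of_lt_of_le hlamm hle
  have hm0 : lamm ≠ 0 := ne_of_gt hlamm
  have h10 : lam1 ≠ 0 := ne_of_gt hlam1
  have hμpos : 0 < lamm⁻¹ := inv_pos.mpr hlamm
  have hdet : IsUnit B.det := hB.det_pos.ne'.isUnit
  have hBinv : (B⁻¹).PosDef := hB.inv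
  have hC : (B⁻¹).PosSemidef := hBinv.posSemidef
  have hCsym : (B⁻¹)ᵀ = B⁻¹ := herm_symm hC.1
  have hCu : B⁻¹ *ᵥ u = lamm⁻¹ • u := by
    have h1 : B⁻¹ *ᵥ (B *ᵥ u) = u := by
      rw [Matrix.mulVec_mulVec, Matrix.nonsing_inv_mul _ hdet, Matrix.one_mulVec]
    rw [hu_eig, Matrix.mulVec_smul] at h1
    calc B⁻¹ *ᵥ u = lamm⁻¹ • (lamm • (B⁻¹ *ᵥ u)) := by
          rw [smul_smul, inv_mul_cancel₀ hm0, one_smul]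
      _ = lamm⁻¹ • u := by rw [h1]
  have hq1 : ∀ x : Fin m1 → ℝ, x ⬝ᵥ (B⁻¹ *ᵥ x) ≤ lamm⁻¹ * (x ⬝ᵥ x) := by
    intro x
    set y := B⁻¹ *ᵥ x with hy
    have hxy : B *ᵥ y = x := by
      rw [hy, Matrix.mulVec_mulVec, Matrix.mul_nonsing_inv _ hdet, Matrix.one_mulVec]
    have h0 : 0 ≤ x ⬝ᵥ y := psd_nonneg hC x
    have h1 : lamm * (y ⬝ᵥ y) ≤ x ⬝ᵥ y := by
      have := hlamm_min y; rwa [hxy, dotProduct_comm y x] at this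
    have hcs : (x ⬝ᵥ y) ^ 2 ≤ (x ⬝ᵥ x) * (y ⬝ᵥ y) := by
      have := Finset.sum_mul_sq_le_sq_mul_sq Finset.univ x y
      simpa [dotProduct, sq] using this
    have hXnn := dot_self_nonneg x
    have hYnn := dot_self_nonneg y
    rcases eq_or_lt_of_le h0 with h|h
    · rw [← h]; exact mul_nonneg hμpos.le hXnn
    · have key : lamm * (x ⬝ᵥ y) ≤ x ⬝ᵥ x := by nlinarith [hcs, h1, h, hXnn, hlamm]
      calc x ⬝ᵥ y = lamm⁻¹ * (lamm * (x ⬝ᵥ y)) := by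
            rw [← mul_assoc, inv_mul_cancel₀ hm0, one_mul]
        _ ≤ lamm⁻¹ * (x ⬝ᵥ x) := mul_le_mul_of_nonneg_left key hμpos.le
  have hqU := quad_upper hC hμpos.le hq1
  have hqL := quad_lower hC hu_norm hCu
  have hqU1 : ∀ x : Fin m1 → ℝ, x ⬝ᵥ (B⁻¹ *ᵥ x) ≤ lamm⁻¹ * (x ⬝ᵥ x) := hq1
  have hqL1 : ∀ x : Fin m1 → ℝ, lamm⁻¹ * (u ⬝ᵥ x) ^ 2 ≤ x ⬝ᵥ (B⁻¹ *ᵥ x) := by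
    intro x; have := hqL 1 x; rwa [pow_one, pow_one] at this
  have hconst : ∀ k : ℕ, (lam1 / lamm) ^ k / lam1 ^ k = lamm⁻¹ ^ k := by
    intro k
    rw [div_pow, div_div, mul_comm (lamm ^ k) (lam1 ^ k), ← div_div,
      div_self (pow_ne_zero k h10), inv_pow, one_div]
  constructor
  · -- Part (1)
    intro A k _hk hAne
    obtain ⟨j0, hj0⟩ : ∃ j, (u ᵥ* A) j ≠ 0 := Function.ne_iff.mp hAne
    have hj0' : u ⬝ᵥ (fun i => A i j0) ≠ 0 := by
      have hv : (u ᵥ* A) j0 = u ⬝ᵥ (fun i => A i j0) := by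
        simp [Matrix.vecMul, dotProduct]
      rwa [hv] at hj0
    have pos1 : 0 < u ⬝ᵥ ((A * Aᵀ) *ᵥ u) := by
      rw [quad_form]
      exact Finset.sum_pos' (fun j _ => sq_nonneg _)
        ⟨j0, Finset.mem_univ _, sq_pos_of_ne_zero hj0'⟩
    have hAne0 : A ≠ 0 := by rintro rfl; simp at hAne
    refine ⟨pos1, tr_AAT_pos hAne0, ?_, ?_⟩
    · rw [mul_div_assoc, hconst, tr_form, quad_form, Finset.sum_mul]
      refine Finset.sum_le_sum fun j _ => ?_
      exact le_trans (le_of_eq (mul_comm _ _)) (hqL k _)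
    · rw [mul_div_assoc, hconst, tr_form, tr_sq, Finset.sum_mul]
      refine Finset.sum_le_sum fun j _ => ?_
      exact le_trans (hqU k _) (le_of_eq (mul_comm _ _))
  · -- Part (2)
    intro A hAne
    have pos1 : 0 < (u ⬝ᵥ (A *ᵥ u)) ^ 2 := sq_pos_of_ne_zero hAne
    have hAne0 : A ≠ 0 := by rintro rfl; simp at hAne
    set X := A * B⁻¹ with hX
    have hXT : Xᵀ = B⁻¹ * Aᵀ := by rw [hX, Matrix.transpose_mul, hCsym]
    have hrw : B⁻¹ * Aᵀ * B⁻¹ * A * B⁻¹ = Xᵀ * B⁻¹ * X := by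
      rw [hXT, hX]; simp only [Matrix.mul_assoc]
    have hXXT : X * Xᵀ = Aᵀᵀ * (B⁻¹) ^ 2 * Aᵀ := by
      rw [hXT, hX, Matrix.transpose_transpose, pow_two]
      simp only [Matrix.mul_assoc]
    refine ⟨pos1, tr_AAT_pos hAne0, ?_, ?_⟩
    · rw [mul_div_assoc, hconst, hrw, tr_form]
      have h3 : u ⬝ᵥ ((X * Xᵀ) *ᵥ u) = (Aᵀ *ᵥ u) ⬝ᵥ ((B⁻¹) ^ 2 *ᵥ (Aᵀ *ᵥ u)) := by
        rw [hXXT, ← Matrix.mulVec_mulVec, ← Matrix.mulVec_mulVec,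
          Matrix.dotProduct_mulVec, Matrix.vecMul_transpose]
      have h4 : lamm⁻¹ ^ 2 * (u ⬝ᵥ (A *ᵥ u)) ^ 2 ≤
          (Aᵀ *ᵥ u) ⬝ᵥ ((B⁻¹) ^ 2 *ᵥ (Aᵀ *ᵥ u)) := by
        have h := hqL 2 (Aᵀ *ᵥ u)
        have hu' : u ⬝ᵥ (Aᵀ *ᵥ u) = u ⬝ᵥ (A *ᵥ u) := by
          rw [Matrix.dotProduct_mulVec, Matrix.vecMul_transpose, dotProduct_comm]
        rwa [hu'] at h
      have h2 : lamm⁻¹ * (u ⬝ᵥ ((X * Xᵀ) *ᵥ u)) ≤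
          ∑ j, (fun i => X i j) ⬝ᵥ (B⁻¹ *ᵥ fun i => X i j) := by
        rw [quad_form, Finset.mul_sum]
        exact Finset.sum_le_sum fun j _ => hqL1 _
      calc (u ⬝ᵥ (A *ᵥ u)) ^ 2 * lamm⁻¹ ^ 3
          = lamm⁻¹ * (lamm⁻¹ ^ 2 * (u ⬝ᵥ (A *ᵥ u)) ^ 2) := by ring
        _ ≤ lamm⁻¹ * ((Aᵀ *ᵥ u) ⬝ᵥ ((B⁻¹) ^ 2 *ᵥ (Aᵀ *ᵥ u))) :=
            mul_le_mul_of_nonneg_left h4 hμpos.le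
        _ = lamm⁻¹ * (u ⬝ᵥ ((X * Xᵀ) *ᵥ u)) := by rw [h3]
        _ ≤ _ := h2
    · rw [mul_div_assoc, hconst, hrw, tr_form]
      have h2 : (∑ j, (fun i => X i j) ⬝ᵥ (B⁻¹ *ᵥ fun i => X i j)) ≤
          lamm⁻¹ * (X * Xᵀ).trace := by
        rw [tr_sq, Finset.mul_sum]
        exact Finset.sum_le_sum fun j _ => hqU1 _
      have h3 : (X * Xᵀ).trace ≤ lamm⁻¹ ^ 2 * (A * Aᵀ).trace := by
        rw [hXXT, tr_form]
        have hAA : (A * Aᵀ).trace = ∑ j, (fun i => Aᵀ i j) ⬝ᵥ (fun i => Aᵀ i j) := by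
          rw [Matrix.trace_mul_comm, ← Matrix.transpose_transpose A]
          exact tr_sq Aᵀ
        rw [hAA, Finset.mul_sum]
        exact Finset.sum_le_sum fun j _ => hqU 2 _
      calc (∑ j, (fun i => X i j) ⬝ᵥ (B⁻¹ *ᵥ fun i => X i j))
          ≤ lamm⁻¹ * (X * Xᵀ).trace := h2
        _ ≤ lamm⁻¹ * (lamm⁻¹ ^ 2 * (A * Aᵀ).trace) :=
            mul_le_mul_of_nonneg_left h3 hμpos.le
        _ = (A * Aᵀ).trace * lamm⁻¹ ^ 3 := by ring
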